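/- The function distrib : Dtry≠∅ (Option a) → Option (Dtry≠∅ a), which recursively filters out None leaves (returning None if everything is filtered) is a distributive law of the free monad Dtry≠∅ over the Option monad: it is natural in a and satisfies the four distributive-law axioms (compatibility with the units and multiplications of both monads). -/

import Mathlib

/- Nonempty finite maps from strings to `b` are modeled as a nonempty finite key set
`s : Finset String` together with a value function `(k : String) → k ∈ s → b`. -/

/-- `DtryNE a = Free Record≠∅ a`: the free monad on nonempty finite string maps. -/
inductive DtryNE (a : Type) : Type
  | pure : a → DtryNE a
  | join : (s : Finset String) → s.Nonempty → ((k : String) → k ∈ s → DtryNE a) → DtryNE a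

namespace DtryNE

variable {a b : Type}

/-- Functorial action. -/
def map (g : a → b) : DtryNE a → DtryNE b
  | .pure x => .pure (g x)
  | .join s hs f => .join s hs fun k h => (f k h).map g

/-- Monad multiplication of the free monad. -/
def mu : DtryNE (DtryNE a) → DtryNE a
  | .pure x => x
  | .join s hs f => .join s hs fun k h => (f k h).mu

attribute [local instance] Classical.propDecidable

/-- `distrib`: recursively filter out `none` leaves, returning `none` if everything
is filtered away.  At a node, `filterNothings` keeps exactly the keys whose subtree
survives, and fails if no key survives. -/
noncomputable def distrib : DtryNE (Option a) → Option (DtryNE a)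
  | .pure mx => mx.map .pure
  | .join s _ f =>
      let g : (k : String) → k ∈ s → Option (DtryNE a) := fun k h => distrib (f k h)
      let s' : Finset String := s.filter (fun k => ∃ h : k ∈ s, (g k h).isSome)
      if h' : s'.Nonempty then
        some (.join s' h' (fun k hk => (g k (by
            have := (Finset.mem_filter.mp hk).1; exact this)).get (by
            have := (Finset.mem_filter.mp hk).2; exact this.choose_spec)))
      else none

end DtryNE

namespace DtryNE
variable {a b α β : Type}
attribute [local instance] Classical.propDecidable

theorem join_congr {s₁ s₂ : Finset String} (hs : s₁ = s₂) {h₁ : s₁.Nonempty} {h₂ : s₂.Nonempty}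
    {f₁ : (k : String) → k ∈ s₁ → DtryNE a} {f₂ : (k : String) → k ∈ s₂ → DtryNE a}
    (hf : ∀ k (hk₁ : k ∈ s₁) (hk₂ : k ∈ s₂), f₁ k hk₁ = f₂ k hk₂) :
    DtryNE.join s₁ h₁ f₁ = DtryNE.join s₂ h₂ f₂ := by
  subst hs
  have : f₁ = f₂ := by funext k hk; exact hf k hk hk
  subst this; rfl

theorem distrib_join (s : Finset String) (hs : s.Nonempty)
    (f : (k : String) → k ∈ s → DtryNE (Option a)) :
    distrib (.join s hs f) =
    if h' : (s.filter fun k => ∃ h : k ∈ s, (distrib (f k h)).isSome).Nonempty then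
      some (.join _ h' (fun k hk => (distrib (f k (Finset.mem_filter.mp hk).1)).get
        (Finset.mem_filter.mp hk).2.choose_spec))
    else none := rfl

theorem distrib_join_congr {s₁ s₂ : Finset String} (hs₁ : s₁.Nonempty) (hs₂ : s₂.Nonempty)
    (f₁ : (k : String) → k ∈ s₁ → DtryNE (Option a))
    (f₂ : (k : String) → k ∈ s₂ → DtryNE (Option a))
    (h : ∀ k, (if h : k ∈ s₁ then distrib (f₁ k h) else none)
            = (if h : k ∈ s₂ then distrib (f₂ k h) else none)) :
    distrib (.join s₁ hs₁ f₁) = distrib (.join s₂ hs₂ f₂) := by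
  have hval : ∀ k (hk₁ : k ∈ s₁) (hk₂ : k ∈ s₂), distrib (f₁ k hk₁) = distrib (f₂ k hk₂) := by
    intro k hk₁ hk₂
    have := h k
    rwa [dif_pos hk₁, dif_pos hk₂] at this
  have hfilter : s₁.filter (fun k => ∃ h : k ∈ s₁, (distrib (f₁ k h)).isSome)
      = s₂.filter (fun k => ∃ h : k ∈ s₂, (distrib (f₂ k h)).isSome) := by
    ext k
    simp only [Finset.mem_filter]
    constructor
    · rintro ⟨hk, hk', hsome⟩
      have hk₂ : k ∈ s₂ := by
        by_contra hk₂
        have := h k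
        rw [dif_pos hk, dif_neg hk₂] at this
        rw [proof_irrel hk' hk, this] at hsome
        simp at hsome
      refine ⟨hk₂, hk₂, ?_⟩
      rw [← hval k hk hk₂, proof_irrel hk hk']; exact hsome
    · rintro ⟨hk, hk', hsome⟩
      have hk₁ : k ∈ s₁ := by
        by_contra hk₁
        have := h k
        rw [dif_neg hk₁, dif_pos hk] at this
        rw [proof_irrel hk' hk, ← this] at hsome
        simp at hsome
      refine ⟨hk₁, hk₁, ?_⟩
      rw [hval k hk₁ hk, proof_irrel hk hk']; exact hsome
  rw [distrib_join, distrib_join]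
  by_cases hne : (s₁.filter fun k => ∃ h : k ∈ s₁, (distrib (f₁ k h)).isSome).Nonempty
  · rw [dif_pos hne, dif_pos (hfilter ▸ hne)]
    congr 1
    apply join_congr hfilter
    intro k hk₁ hk₂
    have hm₁ := (Finset.mem_filter.mp hk₁).1
    have hm₂ := (Finset.mem_filter.mp hk₂).1
    have := hval k hm₁ hm₂
    apply Option.some_injective
    rw [Option.some_get, Option.some_get]
    exact this
  · rw [dif_neg hne, dif_neg (by rwa [← hfilter])]

theorem distrib_join_map (g : DtryNE α → DtryNE β)
    (hg : ∀ t ht u, g (.join t ht u) = .join t ht fun k h => g (u k h))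
    {s : Finset String} (hs : s.Nonempty)
    (f₁ : (k : String) → k ∈ s → DtryNE (Option β))
    (f₂ : (k : String) → k ∈ s → DtryNE (Option α))
    (h : ∀ k (hk : k ∈ s), distrib (f₁ k hk) = Option.map g (distrib (f₂ k hk))) :
    distrib (.join s hs f₁) = Option.map g (distrib (.join s hs f₂)) := by
  have hfilter : s.filter (fun k => ∃ h : k ∈ s, (distrib (f₁ k h)).isSome)
      = s.filter (fun k => ∃ h : k ∈ s, (distrib (f₂ k h)).isSome) := by
    apply Finset.filter_congr
    intro k hk
    constructor
    · rintro ⟨hk', hsome⟩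
      refine ⟨hk', ?_⟩
      revert hsome; rw [h k hk']; cases (f₂ k hk').distrib <;> simp
    · rintro ⟨hk', hsome⟩
      refine ⟨hk', ?_⟩
      rw [h k hk']; revert hsome; cases (f₂ k hk').distrib <;> simp
  rw [distrib_join, distrib_join]
  by_cases hne : (s.filter fun k => ∃ h : k ∈ s, (distrib (f₂ k h)).isSome).Nonempty
  · rw [dif_pos hne, dif_pos (by rw [hfilter]; exact hne), Option.map_some, hg]
    congr 1
    apply join_congr hfilter
    intro k hk₁ hk₂
    have hm := (Finset.mem_filter.mp hk₁).1
    apply Option.some_injective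
    rw [Option.some_get, h k hm, ← Option.map_some, Option.some_get]
  · rw [dif_neg hne, dif_neg (by rw [hfilter]; exact hne)]; rfl

-- Part 1: naturality
theorem part1 {a b : Type} (f : a → b) (t : DtryNE (Option a)) :
    DtryNE.distrib (t.map (Option.map f)) = Option.map (DtryNE.map f) (t.distrib) := by
  induction t with
  | pure mx => cases mx <;> rfl
  | join s hs u ih =>
    show distrib (.join s hs fun k h => (u k h).map (Option.map f))
        = Option.map (map f) (distrib (.join s hs u))
    exact distrib_join_map (map f) (fun _ _ _ => rfl) hs _ _ (fun k hk => ih k hk)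

-- Part 3: unit of Option
theorem part3 {a : Type} (t : DtryNE a) : DtryNE.distrib (t.map some) = some t := by
  induction t with
  | pure x => rfl
  | join s hs u ih =>
    show distrib (.join s hs fun k h => (u k h).map some) = some (.join s hs u)
    rw [distrib_join]
    have hfilter : (s.filter fun k => ∃ h : k ∈ s, (distrib ((u k h).map some)).isSome) = s := by
      apply Finset.filter_true_of_mem
      intro k hk
      exact ⟨hk, by rw [ih k hk]; rfl⟩
    rw [dif_pos (by rw [hfilter]; exact hs)]
    congr 1
    apply join_congr hfilter
    intro k hk₁ hk₂
    apply Option.some_injective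
    rw [Option.some_get, ih k hk₂]

-- Part 4: mu of DtryNE
theorem part4 {a : Type} (t : DtryNE (DtryNE (Option a))) :
    DtryNE.distrib t.mu = Option.map DtryNE.mu (DtryNE.distrib (t.map DtryNE.distrib)) := by
  induction t with
  | pure u =>
    show distrib u = Option.map mu (distrib (.pure (distrib u)))
    show distrib u = Option.map mu (Option.map DtryNE.pure (distrib u))
    rw [Option.map_map]
    cases distrib u <;> rfl
  | join s hs u ih =>
    show distrib (.join s hs fun k h => (u k h).mu)
        = Option.map mu (distrib (.join s hs fun k h => (u k h).map distrib))
    exact distrib_join_map mu (fun _ _ _ => rfl) hs _ _ (fun k hk => ih k hk)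

-- Part 5: mu of Option
theorem distrib_get {γ : Type} (o : Option (DtryNE (Option γ))) (ho : o.isSome) :
    distrib (o.get ho) = Option.join (Option.map distrib o) := by
  cases o with
  | none => simp at ho
  | some v => rfl

theorem part5 {a : Type} (t : DtryNE (Option (Option a))) :
    DtryNE.distrib (t.map Option.join) =
      Option.join (Option.map DtryNE.distrib t.distrib) := by
  induction t with
  | pure mx => cases mx with
    | none => rfl
    | some o => cases o <;> rfl
  | join s hs u ih =>
    show distrib (.join s hs fun k h => (u k h).map Option.join)
        = Option.join (Option.map distrib (distrib (.join s hs u)))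
    rw [distrib_join s hs u]
    by_cases hne : (s.filter fun k => ∃ h : k ∈ s, (distrib (u k h)).isSome).Nonempty
    · rw [dif_pos hne, Option.map_some]
      show _ = distrib (.join _ hne _)
      apply distrib_join_congr
      intro k
      by_cases hk : k ∈ s
      · rw [dif_pos hk, ih k hk]
        by_cases hk' : k ∈ s.filter fun k => ∃ h : k ∈ s, (distrib (u k h)).isSome
        · rw [dif_pos hk', distrib_get]
        · rw [dif_neg hk']
          have hnone : distrib (u k hk) = none := by
            by_contra hc
            exact hk' (Finset.mem_filter.mpr ⟨hk, hk, Option.isSome_iff_ne_none.mpr hc⟩)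
          rw [hnone]; rfl
      · rw [dif_neg hk, dif_neg (fun hc => hk (Finset.mem_filter.mp hc).1)]
    · rw [dif_neg hne, Option.map_none]
      show distrib (.join s hs fun k h => (u k h).map Option.join) = none
      rw [distrib_join]
      rw [dif_neg]
      intro hc
      obtain ⟨k, hk⟩ := hc
      have hm := (Finset.mem_filter.mp hk).1
      have hsome := (Finset.mem_filter.mp hk).2.choose_spec
      rw [ih k (Finset.mem_filter.mp hk).2.choose] at hsome
      have hnone : distrib (u k (Finset.mem_filter.mp hk).2.choose) = none := by
        by_contra hc
        exact hne ⟨k, Finset.mem_filter.mpr ⟨hm, hm,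
          Option.isSome_iff_ne_none.mpr (by rw [proof_irrel hm (Finset.mem_filter.mp hk).2.choose]; exact hc)⟩⟩
      rw [hnone] at hsome
      simp at hsome

end DtryNE


/-- `distrib : Dtry≠∅ (Option a) → Option (Dtry≠∅ a)` is a distributive law
of the free monad `Dtry≠∅` over the `Option` monad: it is natural in `a` and satisfies
the four distributive-law axioms (compatibility with the units and multiplications of
both monads). -/
theorem distrib_is_distributive_law :
    -- naturality
    (∀ {a b : Type} (f : a → b) (t : DtryNE (Option a)),
      DtryNE.distrib (t.map (Option.map f)) = Option.map (DtryNE.map f) (t.distrib)) ∧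
    -- compatibility with the unit of `Dtry≠∅`
    (∀ {a : Type} (mx : Option a),
      DtryNE.distrib (.pure mx) = Option.map DtryNE.pure mx) ∧
    -- compatibility with the unit of `Option`
    (∀ {a : Type} (t : DtryNE a),
      DtryNE.distrib (t.map some) = some t) ∧
    -- compatibility with the multiplication of `Dtry≠∅`
    (∀ {a : Type} (t : DtryNE (DtryNE (Option a))),
      DtryNE.distrib t.mu = Option.map DtryNE.mu (DtryNE.distrib (t.map DtryNE.distrib))) ∧
    -- compatibility with the multiplication of `Option`
    (∀ {a : Type} (t : DtryNE (Option (Option a))),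
      DtryNE.distrib (t.map Option.join) =
        Option.join (Option.map DtryNE.distrib t.distrib)) := by
  exact ⟨fun {a b} f t => DtryNE.part1 f t, fun {a} mx => rfl, fun {a} t => DtryNE.part3 t,
    fun {a} t => DtryNE.part4 t, fun {a} t => DtryNE.part5 t⟩
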